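/- Let n ≥ 1 and N ≥ 2 be integers and let r be an integer with r ≥ n(N−1). Then C(r+n, n) − 1 > N·(C(r+n−1, n−1) − 1), where C(a,b) denotes the binomial coefficient. -/
import Mathlib


/-- if `n ≥ 1`, `N ≥ 2`, and `r ≥ n(N−1)`, then
`C(r+n, n) − 1 > N·(C(r+n−1, n−1) − 1)`. -/
theorem stmt9 (n N r : ℕ) (hn : 1 ≤ n) (hN : 2 ≤ N) (hr : n * (N - 1) ≤ r) :
    N * ((r + n - 1).choose (n - 1) - 1) < (r + n).choose n - 1 := by
  obtain ⟨k, rfl⟩ : ∃ k, n = k + 1 := ⟨n - 1, by omega⟩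
  obtain ⟨M, rfl⟩ : ∃ M, N = M + 2 := ⟨N - 2, by omega⟩
  have hr1 : 1 ≤ r := by
    have h1 : 0 < (k + 1) * (M + 2 - 1) := Nat.mul_pos (by omega) (by omega)
    omega
  have hsimp1 : r + (k + 1) - 1 = r + k := by omega
  have hsimp2 : k + 1 - 1 = k := by omega
  rw [hsimp1, hsimp2]
  set C' := (r + k).choose k with hC'def
  set C := (r + (k + 1)).choose (k + 1) with hCdef
  have hid : C * (k + 1) = (r + k + 1) * C' := by
    have h := Nat.add_one_mul_choose_eq (r + k) k
    simpa [hCdef, hC'def, Nat.succ_eq_add_one, show r + (k + 1) = r + k + 1 by omega,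
      Nat.mul_comm] using h.symm
  have hC'pos : 1 ≤ C' := Nat.choose_pos (by omega)
  have hC2 : 2 ≤ C := by
    have h1 : (k + 2).choose (k + 1) ≤ C := Nat.choose_le_choose (k + 1) (by omega)
    have h2 : (k + 2).choose (k + 1) = k + 2 := Nat.choose_succ_self_right (k + 1)
    omega
  have hNC : (M + 2) * C' ≤ C := by
    have hge : (M + 2) * (k + 1) ≤ r + k + 1 := by
      have h : (k + 1) * (M + 2 - 1) + (k + 1) = (k + 1) * (M + 2) := by
        have : M + 2 - 1 = M + 1 := by omega
        rw [this]; ring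
      nlinarith [hr]
    have h1 : ((M + 2) * C') * (k + 1) ≤ C * (k + 1) := by
      calc ((M + 2) * C') * (k + 1) = ((M + 2) * (k + 1)) * C' := by ring
        _ ≤ (r + k + 1) * C' := Nat.mul_le_mul_right _ hge
        _ = C * (k + 1) := hid.symm
    exact Nat.le_of_mul_le_mul_right h1 (by omega)
  clear_value C' C
  obtain ⟨D, rfl⟩ : ∃ D, C' = D + 1 := ⟨C' - 1, by omega⟩
  have hmul : (M + 2) * (D + 1 - 1) + (M + 2) = (M + 2) * (D + 1) := by
    simp; ring
  omega
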